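/- Let u : ℝ → ℝ be a strictly convex differentiable function such that there exists K'' > 1 with ((K''+1)/K'')·(u(y) − u(x) − u'(x)(y−x)) ≤ (u'(x) − u'(y))(x − y) for all x, y. Fix x ∈ ℝ and define u_x(s) = u(x+s) − u(x) − u'(x)·s. Then for every r > 0 and every y with |y| ≥ r, u_x(|y|) ≥ u_x(r)·(|y|/r)^((K''+1)/K''). -/

import Mathlib

/-- Gronwall-type lower bound for the second-order increment of a convex function on ℝ. -/
theorem stmt1 (u : ℝ → ℝ) (hconv : StrictConvexOn ℝ Set.univ u)
    (hdiff : Differentiable ℝ u) (K : ℝ) (hK : 1 < K)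
    (h : ∀ x y : ℝ,
      (K + 1) / K * (u y - u x - deriv u x * (y - x)) ≤ (deriv u x - deriv u y) * (x - y))
    (x : ℝ) :
    ∀ r : ℝ, 0 < r → ∀ y : ℝ, r ≤ |y| →
      (u (x + r) - u x - deriv u x * r) * (|y| / r) ^ ((K + 1) / K) ≤
        u (x + |y|) - u x - deriv u x * |y| := by
  intro r hr y hy
  set c : ℝ := (K + 1) / K with hc
  set t : ℝ := |y| with htdef
  have ht : 0 < t := lt_of_lt_of_le hr hy
  set v : ℝ → ℝ := fun s => u (x + s) - u x - deriv u x * s with hv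
  have hvderiv : ∀ s : ℝ, HasDerivAt v (deriv u (x + s) - deriv u x) s := by
    intro s
    have h1 : HasDerivAt (fun s : ℝ => u (x + s)) (deriv u (x + s)) s := by
      have h2 := (hdiff (x + s)).hasDerivAt
      have h3 : HasDerivAt (fun s : ℝ => x + s) 1 s := (hasDerivAt_id s).const_add x
      have h23 := h2.comp s h3
      rw [mul_one] at h23
      exact h23
    have h4 : HasDerivAt (fun s : ℝ => deriv u x * s) (deriv u x) s := by
      simpa using (hasDerivAt_id s).const_mul (deriv u x)
    exact (h1.sub_const (u x)).sub h4
  set g : ℝ → ℝ := fun s => v s * s ^ (-c) with hg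
  have hgderiv : ∀ s : ℝ, 0 < s →
      HasDerivAt g ((deriv u (x + s) - deriv u x) * s ^ (-c) + v s * (-c * s ^ (-c - 1))) s := by
    intro s hs
    have hp : HasDerivAt (fun s : ℝ => s ^ (-c)) (-c * s ^ (-c - 1)) s :=
      Real.hasDerivAt_rpow_const (Or.inl hs.ne')
    exact (hvderiv s).mul hp
  have key : ∀ s : ℝ, 0 < s → c * v s ≤ (deriv u (x + s) - deriv u x) * s := by
    intro s hs
    have h5 := h x (x + s)
    simp only [hv]
    ring_nf
    ring_nf at h5
    linarith
  have hmono : MonotoneOn g (Set.Ici r) := by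
    apply monotoneOn_of_deriv_nonneg (convex_Ici r)
    · intro s hs
      exact ((hgderiv s (lt_of_lt_of_le hr hs)).continuousAt).continuousWithinAt
    · intro s hs
      rw [interior_Ici] at hs
      exact ((hgderiv s (hr.trans hs)).differentiableAt).differentiableWithinAt
    · intro s hs
      rw [interior_Ici] at hs
      have hs0 : 0 < s := hr.trans hs
      rw [(hgderiv s hs0).deriv]
      have hkey := key s hs0
      have h6 : s ^ (-c) = s ^ (-c - 1) * s := by
        rw [← Real.rpow_add_one hs0.ne' (-c - 1)]; ring_nf
      have h7 : (0:ℝ) < s ^ (-c - 1) := Real.rpow_pos_of_pos hs0 _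
      calc (0:ℝ) ≤ s ^ (-c - 1) * ((deriv u (x + s) - deriv u x) * s - c * v s) := by
              exact mul_nonneg h7.le (by linarith)
        _ = (deriv u (x + s) - deriv u x) * s ^ (-c) + v s * (-c * s ^ (-c - 1)) := by
              rw [h6]; ring
  have hle : g r ≤ g t := hmono (Set.mem_Ici.mpr le_rfl) hy hy
  have htc : (0:ℝ) < t ^ c := Real.rpow_pos_of_pos ht _
  have hrc : (0:ℝ) < r ^ c := Real.rpow_pos_of_pos hr _
  have h8 := mul_le_mul_of_nonneg_right hle htc.le
  have h9 : t ^ (-c) * t ^ c = 1 := by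
    rw [← Real.rpow_add ht]; simp
  have h10 : r ^ (-c) = (r ^ c)⁻¹ := Real.rpow_neg hr.le c
  have h11 : (t / r) ^ c = t ^ c / r ^ c := Real.div_rpow ht.le hr.le c
  have hgoal : v r * (t / r) ^ c ≤ v t := by
    rw [h11]
    simp only [hg] at h8
    calc v r * (t ^ c / r ^ c) = v r * r ^ (-c) * t ^ c := by
          rw [h10]; ring
      _ ≤ v t * t ^ (-c) * t ^ c := h8
      _ = v t := by rw [mul_assoc, h9, mul_one]
  simpa [hv] using hgoal
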